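/- The mixed vertex operators are mutually inverse: Γ_{L+}(x) Γ_{R+}(-x) = Γ_{R+}(-x) Γ_{L+}(x) = Id as operators on the bosonic Fock space (and similarly for the minus versions). -/

import Mathlib

open scoped Classical

/-- An integer partition: a nonincreasing sequence of nonnegative integers, eventually zero. -/
structure IntPartition where
  f : ℕ → ℕ
  antitone : ∀ i j : ℕ, i ≤ j → f j ≤ f i
  eventually_zero : ∃ N : ℕ, ∀ n : ℕ, N ≤ n → f n = 0

/-- `InterF f g` means `f ≻ g`, i.e. `f 0 ≥ g 0 ≥ f 1 ≥ g 1 ≥ ⋯` (0-indexed). -/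
def InterF (f g : ℕ → ℕ) : Prop := ∀ i : ℕ, g i ≤ f i ∧ f (i + 1) ≤ g i

/-- `conjF f i` is the `(i+1)`-st part of the conjugate partition: the number of `j` with `f j ≥ i+1`. -/
noncomputable def conjF (f : ℕ → ℕ) (i : ℕ) : ℕ := Set.ncard {j : ℕ | i + 1 ≤ f j}

/-- The size `|f| = Σ f i` of a partition. -/
noncomputable def sizeF (f : ℕ → ℕ) : ℕ := ∑ᶠ i : ℕ, f i

/-- The empty partition. -/
def emptyP : IntPartition := ⟨fun _ => 0, fun _ _ _ => le_rfl, ⟨0, fun _ _ => rfl⟩⟩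

/-- `Prec a μ λ` means `μ ≺ λ` in type `a`: for `a = true` (type `L`), `λ/μ` is a horizontal
strip (`λ ≻ μ`); for `a = false` (type `R`), `λ'/μ'` is a horizontal strip. -/
def Prec (a : Bool) (mu lam : IntPartition) : Prop :=
  if a then InterF lam.f mu.f else InterF (conjF lam.f) (conjF mu.f)

theorem IntPartition.ext' {p q : IntPartition} (h : p.f = q.f) : p = q := by
  cases p; cases q; cases h; rfl

theorem conjSet_finite {f : ℕ → ℕ} {N : ℕ} (hN : ∀ n : ℕ, N ≤ n → f n = 0) (i : ℕ) :
    {j : ℕ | i + 1 ≤ f j}.Finite := by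
  apply (Set.finite_Iio N).subset
  intro j hj
  simp only [Set.mem_setOf_eq] at hj
  by_contra hc
  simp only [Set.mem_Iio, not_lt] at hc
  have := hN j hc
  omega

theorem lt_conjF_iff {f : ℕ → ℕ} (hmono : ∀ i j : ℕ, i ≤ j → f j ≤ f i)
    {N : ℕ} (hN : ∀ n : ℕ, N ≤ n → f n = 0) (i j : ℕ) :
    j < conjF f i ↔ i + 1 ≤ f j := by
  constructor
  · intro h
    by_contra hc
    push_neg at hc
    have hsub : {k : ℕ | i + 1 ≤ f k} ⊆ Set.Iio j := by
      intro k hk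
      simp only [Set.mem_setOf_eq] at hk
      simp only [Set.mem_Iio]
      by_contra hk'
      push_neg at hk'
      exact absurd (le_trans hk (hmono j k hk')) (by omega)
    have := Set.ncard_le_ncard hsub (Set.finite_Iio j)
    rw [← Finset.coe_range, Set.ncard_coe_finset, Finset.card_range] at this
    unfold conjF at h
    omega
  · intro h
    have hsub : Set.Iio (j+1) ⊆ {k : ℕ | i + 1 ≤ f k} := by
      intro k hk
      simp only [Set.mem_Iio] at hk
      exact le_trans h (hmono k j (by omega))
    have := Set.ncard_le_ncard hsub (conjSet_finite hN i)
    rw [← Finset.coe_range, Set.ncard_coe_finset, Finset.card_range] at this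
    unfold conjF
    omega

/-- `λ/ν` is a vertical strip (as encoded by conjugate interlacing) iff rowwise
`ν_i ≤ λ_i ≤ ν_i + 1`. Here `q` plays the role of the bigger partition. -/
theorem vert_iff (p q : IntPartition) :
    InterF (conjF q.f) (conjF p.f) ↔ ∀ i : ℕ, p.f i ≤ q.f i ∧ q.f i ≤ p.f i + 1 := by
  obtain ⟨Np, hNp⟩ := p.eventually_zero
  obtain ⟨Nq, hNq⟩ := q.eventually_zero
  constructor
  · intro h j
    constructor
    · rcases Nat.eq_zero_or_pos (p.f j) with h0 | h0
      · omega
      · have h1 : j < conjF p.f (p.f j - 1) :=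
          (lt_conjF_iff p.antitone hNp _ j).2 (by omega)
        have h2 : j < conjF q.f (p.f j - 1) := lt_of_lt_of_le h1 (h _).1
        have := (lt_conjF_iff q.antitone hNq _ j).1 h2
        omega
    · by_contra hc
      push_neg at hc
      have h1 : j < conjF q.f (p.f j + 1) :=
        (lt_conjF_iff q.antitone hNq _ j).2 (by omega)
      have h2 : j < conjF p.f (p.f j) := lt_of_lt_of_le h1 (h (p.f j)).2
      have := (lt_conjF_iff p.antitone hNp _ j).1 h2
      omega
  · intro h i
    constructor
    · apply Set.ncard_le_ncard _ (conjSet_finite hNq i)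
      intro k hk
      simp only [Set.mem_setOf_eq] at hk ⊢
      exact le_trans hk (h k).1
    · apply Set.ncard_le_ncard _ (conjSet_finite hNp i)
      intro k hk
      simp only [Set.mem_setOf_eq] at hk ⊢
      have := (h k).2
      omega

theorem sizeF_eq_sum {f : ℕ → ℕ} {N : ℕ} (hN : ∀ n : ℕ, N ≤ n → f n = 0) :
    sizeF f = ∑ i ∈ Finset.range N, f i := by
  apply finsum_eq_finset_sum_of_support_subset
  intro x hx
  simp only [Function.mem_support] at hx
  simp only [Finset.coe_range, Set.mem_Iio]
  by_contra hc
  exact hx (hN x (by omega))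

theorem sizeF_le {f g : ℕ → ℕ} {N : ℕ} (hN : ∀ n : ℕ, N ≤ n → g n = 0)
    (h : ∀ i, f i ≤ g i) : sizeF f ≤ sizeF g := by
  have hNf : ∀ n : ℕ, N ≤ n → f n = 0 := fun n hn => by
    have := h n; have := hN n hn; omega
  rw [sizeF_eq_sum hN, sizeF_eq_sum hNf]
  exact Finset.sum_le_sum fun i _ => h i

theorem sizeF_update_succ (f : ℕ → ℕ) {N : ℕ} (hN : ∀ n : ℕ, N ≤ n → f n = 0)
    (i0 u : ℕ) :
    sizeF (Function.update f i0 (u + 1)) = sizeF (Function.update f i0 u) + 1 := by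
  set M := max N (i0 + 1) with hM
  have hmem : i0 ∈ Finset.range M := Finset.mem_range.2 (by omega)
  have h1 : ∀ n : ℕ, M ≤ n → Function.update f i0 (u+1) n = 0 := by
    intro n hn
    rw [Function.update_of_ne (by omega)]
    exact hN n (by omega)
  have h2 : ∀ n : ℕ, M ≤ n → Function.update f i0 u n = 0 := by
    intro n hn
    rw [Function.update_of_ne (by omega)]
    exact hN n (by omega)
  rw [sizeF_eq_sum h1, sizeF_eq_sum h2,
    Finset.sum_update_of_mem hmem, Finset.sum_update_of_mem hmem]
  omega

theorem finite_below (lam : IntPartition) :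
    {ν : IntPartition | ∀ i, ν.f i ≤ lam.f i}.Finite := by
  obtain ⟨N, hN⟩ := lam.eventually_zero
  apply Set.Finite.of_finite_image (f := fun ν : IntPartition => fun i : Fin N => ν.f i)
  · apply Set.Finite.subset (Set.Finite.pi (t := fun _ : Fin N => Set.Iic (lam.f 0))
      (fun _ => Set.finite_Iic _))
    rintro g ⟨ν, hν, rfl⟩
    intro i _
    exact le_trans (hν i) (lam.antitone 0 i (Nat.zero_le _))
  · intro ν hν ν' hν' hh
    apply IntPartition.ext'
    funext i
    by_cases hi : i < N
    · exact congrFun hh ⟨i, hi⟩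
    · have h1 := hν i
      have h2 := hν' i
      have := hN i (by omega)
      omega

theorem sum_cancel {S : Set IntPartition} (hfin : S.Finite) (e : IntPartition → ℕ)
    (φ : IntPartition → IntPartition) (hmem : ∀ ν ∈ S, φ ν ∈ S)
    (hinv : ∀ ν ∈ S, φ (φ ν) = ν)
    (hsign : ∀ ν ∈ S, ((-1 : ℤ)) ^ (e (φ ν)) = -((-1 : ℤ)) ^ (e ν)) :
    (∑ᶠ ν ∈ S, ((-1 : ℤ)) ^ (e ν)) = 0 := by
  rw [← hfin.coe_toFinset, finsum_mem_coe_finset]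
  apply Finset.sum_involution (fun ν _ => φ ν)
  · intro a ha
    rw [hsign a (hfin.mem_toFinset.1 ha)]
    ring
  · intro a ha _ hc
    have := hsign a (hfin.mem_toFinset.1 ha)
    rw [hc] at this
    have h2 : ((-1 : ℤ)) ^ (e a) ≠ 0 := by positivity
    omega
  · intro a ha
    exact hfin.mem_toFinset.2 (hmem a (hfin.mem_toFinset.1 ha))
  · intro a ha
    exact hinv a (hfin.mem_toFinset.1 ha)

/-- Build a partition by updating one value. -/
def updP (ν : IntPartition) (i0 v : ℕ) (hlo : ν.f (i0 + 1) ≤ v)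
    (hhi : ∀ j, j < i0 → v ≤ ν.f j) : IntPartition where
  f := Function.update ν.f i0 v
  antitone := by
    intro i j hij
    rcases eq_or_ne j i0 with rfl | hj
    · rcases eq_or_ne i j with rfl | hi
      · rfl
      · rw [Function.update_self, Function.update_of_ne hi]
        exact hhi i (by omega)
    · rw [Function.update_of_ne hj]
      rcases eq_or_ne i i0 with rfl | hi
      · rw [Function.update_self]
        exact le_trans (ν.antitone (i+1) j (by omega)) hlo
      · rw [Function.update_of_ne hi]
        exact ν.antitone i j hij
  eventually_zero := by
    obtain ⟨N, hN⟩ := ν.eventually_zero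
    refine ⟨max N (i0 + 1), fun n hn => ?_⟩
    rw [Function.update_of_ne (by omega)]
    exact hN n (by omega)

theorem keyL (κ lam : IntPartition) :
    (∑ᶠ ν ∈ {ν : IntPartition | InterF ν.f κ.f ∧ InterF (conjF lam.f) (conjF ν.f)},
        ((-1 : ℤ)) ^ (sizeF lam.f - sizeF ν.f)) = if κ = lam then 1 else 0 := by
  obtain ⟨N, hN⟩ := lam.eventually_zero
  set S : Set IntPartition :=
    {ν : IntPartition | InterF ν.f κ.f ∧ InterF (conjF lam.f) (conjF ν.f)} with hS
  have hmemS : ∀ ν : IntPartition, ν ∈ S ↔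
      (∀ i, κ.f i ≤ ν.f i ∧ ν.f (i+1) ≤ κ.f i) ∧
      (∀ i, ν.f i ≤ lam.f i ∧ lam.f i ≤ ν.f i + 1) := by
    intro ν
    simp only [hS, Set.mem_setOf_eq]
    exact and_congr Iff.rfl (vert_iff ν lam)
  by_cases hkl : κ = lam
  · rw [if_pos hkl]
    have hsing : S = {κ} := by
      ext ν
      rw [hmemS]
      simp only [Set.mem_singleton_iff]
      constructor
      · rintro ⟨h1, h2⟩
        apply IntPartition.ext'
        funext i
        have e1 := (h1 i).1
        have e2 := (h2 i).1
        rw [← hkl] at e2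
        omega
      · rintro rfl
        refine ⟨fun i => ⟨le_refl _, IntPartition.antitone _ i (i+1) (by omega)⟩, fun i => ?_⟩
        rw [← hkl]
        omega
    rw [hsing, finsum_mem_singleton, ← hkl, Nat.sub_self, pow_zero]
  · rw [if_neg hkl]
    by_cases hle : ∀ i, κ.f i ≤ lam.f i
    · -- cancellation case
      have hex : ∃ i, κ.f i < lam.f i := by
        by_contra hc
        push_neg at hc
        exact hkl (IntPartition.ext' (funext fun i => le_antisymm (hle i) (hc i)))
      obtain ⟨i0, hi0, hmin⟩ : ∃ i0 : ℕ, κ.f i0 < lam.f i0 ∧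
          ∀ j, j < i0 → κ.f j = lam.f j :=
        ⟨Nat.find hex, Nat.find_spec hex, fun j hj =>
          le_antisymm (hle j) (not_lt.1 (Nat.find_min hex hj))⟩
      set v : IntPartition → ℕ :=
        fun ν => if ν.f i0 = lam.f i0 then lam.f i0 - 1 else lam.f i0 with hv
      have hv1 : ∀ ν, lam.f i0 - 1 ≤ v ν := by
        intro ν; simp only [hv]; split <;> omega
      have hv2 : ∀ ν, v ν ≤ lam.f i0 := by
        intro ν; simp only [hv]; split <;> omega
      have hlo : ∀ ν : IntPartition, ν ∈ S → ν.f (i0 + 1) ≤ v ν := by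
        intro ν hν
        obtain ⟨h1, _⟩ := (hmemS ν).1 hν
        have := (h1 i0).2
        have := hv1 ν
        omega
      have hhi : ∀ ν : IntPartition, ν ∈ S → ∀ j, j < i0 → v ν ≤ ν.f j := by
        intro ν hν j hj
        obtain ⟨h1, _⟩ := (hmemS ν).1 hν
        have e1 := hmin j hj
        have e2 := (h1 j).1
        have e3 := lam.antitone j i0 (by omega)
        have := hv2 ν
        omega
      set φ : IntPartition → IntPartition := fun ν =>
        if hν : ν ∈ S then updP ν i0 (v ν) (hlo ν hν) (hhi ν hν) else ν with hφ
      have hφf : ∀ ν : IntPartition, ν ∈ S →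
          (φ ν).f = Function.update ν.f i0 (v ν) := by
        intro ν hν
        simp only [hφ, dif_pos hν]
        rfl
      have hfin : S.Finite := by
        apply (finite_below lam).subset
        intro ν hν
        exact fun i => (((hmemS ν).1 hν).2 i).1
      have hmem : ∀ ν ∈ S, φ ν ∈ S := by
        intro ν hν
        obtain ⟨h1, h2⟩ := (hmemS ν).1 hν
        rw [hmemS, hφf ν hν]
        constructor
        · intro i
          by_cases hi : i = i0
          · rw [hi]
            constructor
            · rw [Function.update_self]
              have := hv1 ν; omega
            · rw [Function.update_of_ne (by omega)]
              exact (h1 i0).2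
          · rw [Function.update_of_ne hi]
            by_cases he : i + 1 = i0
            · refine ⟨(h1 i).1, ?_⟩
              rw [he, Function.update_self]
              have e1 := hmin i (by omega)
              have e2 := lam.antitone i i0 (by omega)
              have := hv2 ν
              omega
            · rw [Function.update_of_ne he]
              exact h1 i
        · intro i
          by_cases hi : i = i0
          · rw [hi, Function.update_self]
            have := hv1 ν; have := hv2 ν; omega
          · rw [Function.update_of_ne hi]
            exact h2 i
      have hinv : ∀ ν ∈ S, φ (φ ν) = ν := by
        intro ν hν
        obtain ⟨h1, h2⟩ := (hmemS ν).1 hν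
        have hφν : (φ ν).f i0 = v ν := by
          rw [hφf ν hν, Function.update_self]
        have hvv : v (φ ν) = ν.f i0 := by
          rcases eq_or_ne (ν.f i0) (lam.f i0) with he | he
          · simp only [hv, hφν, if_pos he]
            rw [if_neg (show ¬(lam.f i0 - 1 = lam.f i0) by omega), he]
          · have hb : ν.f i0 = lam.f i0 - 1 := by
              have := h2 i0; omega
            simp only [hv, hφν, if_neg he]
            rw [if_pos trivial]
            omega
        apply IntPartition.ext'
        rw [hφf _ (hmem ν hν), hφf ν hν]
        funext j
        by_cases hj : j = i0
        · rw [hj, Function.update_self, hvv]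
        · rw [Function.update_of_ne hj, Function.update_of_ne hj]
      have hsign : ∀ ν ∈ S,
          ((-1 : ℤ)) ^ (sizeF lam.f - sizeF (φ ν).f) =
            -((-1 : ℤ)) ^ (sizeF lam.f - sizeF ν.f) := by
        intro ν hν
        obtain ⟨h1, h2⟩ := (hmemS ν).1 hν
        obtain ⟨Nν, hNν⟩ := ν.eventually_zero
        have hνle : sizeF ν.f ≤ sizeF lam.f := sizeF_le hN (fun i => (h2 i).1)
        have hφle : sizeF (φ ν).f ≤ sizeF lam.f := by
          apply sizeF_le hN
          intro i
          rw [hφf ν hν]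
          by_cases hi : i = i0
          · rw [hi, Function.update_self]; exact hv2 ν
          · rw [Function.update_of_ne hi]; exact (h2 i).1
        have hstep := sizeF_update_succ ν.f hNν i0 (lam.f i0 - 1)
        have hl1 : lam.f i0 - 1 + 1 = lam.f i0 := by omega
        rw [hl1] at hstep
        rcases eq_or_ne (ν.f i0) (lam.f i0) with he | he
        · have hvν : v ν = lam.f i0 - 1 := by
            simp only [hv]; rw [if_pos he]
          have hself : Function.update ν.f i0 (lam.f i0) = ν.f := by
            rw [← he]; exact Function.update_eq_self i0 ν.f
          rw [hself] at hstep
          have hφs : sizeF (φ ν).f = sizeF (Function.update ν.f i0 (lam.f i0 - 1)) := by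
            rw [hφf ν hν, hvν]
          have hexp : sizeF lam.f - sizeF (φ ν).f = (sizeF lam.f - sizeF ν.f) + 1 := by
            omega
          rw [hexp, pow_succ]; ring
        · have hb : ν.f i0 = lam.f i0 - 1 := by
            have := h2 i0; omega
          have hvν : v ν = lam.f i0 := by
            simp only [hv]; rw [if_neg he]
          have hself : Function.update ν.f i0 (lam.f i0 - 1) = ν.f := by
            rw [← hb]; exact Function.update_eq_self i0 ν.f
          rw [hself] at hstep
          have hφs : sizeF (φ ν).f = sizeF ν.f + 1 := by
            rw [hφf ν hν, hvν, hstep]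
          have hexp : sizeF lam.f - sizeF ν.f = (sizeF lam.f - sizeF (φ ν).f) + 1 := by
            omega
          rw [hexp, pow_succ]; ring
      exact sum_cancel hfin (fun ν => sizeF lam.f - sizeF ν.f) φ hmem hinv hsign
    · -- empty case
      push_neg at hle
      obtain ⟨i, hi⟩ := hle
      have hempty : S = ∅ := by
        ext ν
        simp only [Set.mem_empty_iff_false, iff_false]
        intro hν
        obtain ⟨h1, h2⟩ := (hmemS ν).1 hν
        have := (h1 i).1
        have := (h2 i).1
        omega
      rw [hempty, finsum_mem_empty]

theorem keyR (κ lam : IntPartition) :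
    (∑ᶠ ν ∈ {ν : IntPartition | InterF (conjF ν.f) (conjF κ.f) ∧ InterF lam.f ν.f},
        ((-1 : ℤ)) ^ (sizeF ν.f - sizeF κ.f)) = if κ = lam then 1 else 0 := by
  obtain ⟨N, hN⟩ := lam.eventually_zero
  set S : Set IntPartition :=
    {ν : IntPartition | InterF (conjF ν.f) (conjF κ.f) ∧ InterF lam.f ν.f} with hS
  have hmemS : ∀ ν : IntPartition, ν ∈ S ↔
      (∀ i, κ.f i ≤ ν.f i ∧ ν.f i ≤ κ.f i + 1) ∧
      (∀ i, ν.f i ≤ lam.f i ∧ lam.f (i+1) ≤ ν.f i) := by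
    intro ν
    simp only [hS, Set.mem_setOf_eq]
    exact and_congr (vert_iff κ ν) Iff.rfl
  by_cases hkl : κ = lam
  · rw [if_pos hkl]
    have hsing : S = {κ} := by
      ext ν
      rw [hmemS]
      simp only [Set.mem_singleton_iff]
      constructor
      · rintro ⟨h1, h2⟩
        apply IntPartition.ext'
        funext i
        have e1 := (h1 i).1
        have e2 := (h2 i).1
        rw [← hkl] at e2
        omega
      · rintro rfl
        refine ⟨fun i => ⟨le_refl _, by omega⟩, fun i => ?_⟩
        rw [← hkl]
        exact ⟨le_refl _, IntPartition.antitone _ i (i+1) (by omega)⟩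
    rw [hsing, finsum_mem_singleton, Nat.sub_self, pow_zero]
  · rw [if_neg hkl]
    by_cases hle : ∀ i, κ.f i ≤ lam.f i
    · -- cancellation case
      have hex : ∃ i, κ.f i < lam.f i := by
        by_contra hc
        push_neg at hc
        exact hkl (IntPartition.ext' (funext fun i => le_antisymm (hle i) (hc i)))
      obtain ⟨i0, hi0, hmax⟩ : ∃ i0 : ℕ, κ.f i0 < lam.f i0 ∧
          ∀ j, i0 < j → κ.f j = lam.f j := by
        refine ⟨Nat.findGreatest (fun i => κ.f i < lam.f i) N, ?_, ?_⟩
        · obtain ⟨i, hi⟩ := hex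
          have hiN : i ≤ N := by
            by_contra hc
            have := hN i (by omega)
            omega
          exact Nat.findGreatest_spec (P := fun i => κ.f i < lam.f i) hiN hi
        · intro j hj
          by_cases hjN : j ≤ N
          · have := Nat.findGreatest_is_greatest (P := fun i => κ.f i < lam.f i) hj hjN
            have := hle j
            omega
          · have := hN j (by omega)
            have := hle j
            omega
      set v : IntPartition → ℕ :=
        fun ν => if ν.f i0 = κ.f i0 then κ.f i0 + 1 else κ.f i0 with hv
      have hv1 : ∀ ν, κ.f i0 ≤ v ν := by
        intro ν; simp only [hv]; split <;> omega
      have hv2 : ∀ ν, v ν ≤ κ.f i0 + 1 := by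
        intro ν; simp only [hv]; split <;> omega
      have hlo : ∀ ν : IntPartition, ν ∈ S → ν.f (i0 + 1) ≤ v ν := by
        intro ν hν
        obtain ⟨_, h2⟩ := (hmemS ν).1 hν
        have e1 := (h2 (i0+1)).1
        have e2 := hmax (i0+1) (by omega)
        have e3 := κ.antitone i0 (i0+1) (by omega)
        have := hv1 ν
        omega
      have hhi : ∀ ν : IntPartition, ν ∈ S → ∀ j, j < i0 → v ν ≤ ν.f j := by
        intro ν hν j hj
        obtain ⟨_, h2⟩ := (hmemS ν).1 hν
        have e1 := (h2 j).2
        have e2 := lam.antitone (j+1) i0 (by omega)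
        have := hv2 ν
        omega
      set φ : IntPartition → IntPartition := fun ν =>
        if hν : ν ∈ S then updP ν i0 (v ν) (hlo ν hν) (hhi ν hν) else ν with hφ
      have hφf : ∀ ν : IntPartition, ν ∈ S →
          (φ ν).f = Function.update ν.f i0 (v ν) := by
        intro ν hν
        simp only [hφ, dif_pos hν]
        rfl
      have hfin : S.Finite := by
        apply (finite_below lam).subset
        intro ν hν
        exact fun i => (((hmemS ν).1 hν).2 i).1
      have hmem : ∀ ν ∈ S, φ ν ∈ S := by
        intro ν hν
        obtain ⟨h1, h2⟩ := (hmemS ν).1 hν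
        rw [hmemS, hφf ν hν]
        constructor
        · intro i
          by_cases hi : i = i0
          · rw [hi, Function.update_self]
            have := hv1 ν; have := hv2 ν; omega
          · rw [Function.update_of_ne hi]
            exact h1 i
        · intro i
          by_cases hi : i = i0
          · rw [hi, Function.update_self]
            have e1 := hmax (i0+1) (by omega)
            have e2 := κ.antitone i0 (i0+1) (by omega)
            have e3 := hv1 ν
            have e4 := hv2 ν
            omega
          · rw [Function.update_of_ne hi]
            exact h2 i
      have hinv : ∀ ν ∈ S, φ (φ ν) = ν := by
        intro ν hν
        obtain ⟨h1, h2⟩ := (hmemS ν).1 hν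
        have hφν : (φ ν).f i0 = v ν := by
          rw [hφf ν hν, Function.update_self]
        have hvv : v (φ ν) = ν.f i0 := by
          rcases eq_or_ne (ν.f i0) (κ.f i0) with he | he
          · simp only [hv, hφν, if_pos he]
            rw [if_neg (show ¬(κ.f i0 + 1 = κ.f i0) by omega), he]
          · have hb : ν.f i0 = κ.f i0 + 1 := by
              have := h1 i0; omega
            simp only [hv, hφν, if_neg he]
            rw [if_pos trivial]
            omega
        apply IntPartition.ext'
        rw [hφf _ (hmem ν hν), hφf ν hν]
        funext j
        by_cases hj : j = i0
        · rw [hj, Function.update_self, hvv]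
        · rw [Function.update_of_ne hj, Function.update_of_ne hj]
      have hsign : ∀ ν ∈ S,
          ((-1 : ℤ)) ^ (sizeF (φ ν).f - sizeF κ.f) =
            -((-1 : ℤ)) ^ (sizeF ν.f - sizeF κ.f) := by
        intro ν hν
        obtain ⟨h1, h2⟩ := (hmemS ν).1 hν
        obtain ⟨Nν, hNν⟩ := ν.eventually_zero
        obtain ⟨Nφ, hNφ⟩ := (φ ν).eventually_zero
        have hνge : sizeF κ.f ≤ sizeF ν.f := sizeF_le hNν (fun i => (h1 i).1)
        have hφge : sizeF κ.f ≤ sizeF (φ ν).f := by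
          apply sizeF_le hNφ
          intro i
          rw [hφf ν hν]
          by_cases hi : i = i0
          · rw [hi, Function.update_self]; exact hv1 ν
          · rw [Function.update_of_ne hi]; exact (h1 i).1
        have hstep := sizeF_update_succ ν.f hNν i0 (κ.f i0)
        rcases eq_or_ne (ν.f i0) (κ.f i0) with he | he
        · have hvν : v ν = κ.f i0 + 1 := by
            simp only [hv]; rw [if_pos he]
          have hself : Function.update ν.f i0 (κ.f i0) = ν.f := by
            rw [← he]; exact Function.update_eq_self i0 ν.f
          rw [hself] at hstep
          have hφs : sizeF (φ ν).f = sizeF ν.f + 1 := by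
            rw [hφf ν hν, hvν, hstep]
          have hexp : sizeF (φ ν).f - sizeF κ.f = (sizeF ν.f - sizeF κ.f) + 1 := by
            omega
          rw [hexp, pow_succ]; ring
        · have hb : ν.f i0 = κ.f i0 + 1 := by
            have := h1 i0; omega
          have hvν : v ν = κ.f i0 := by
            simp only [hv]; rw [if_neg he]
          have hself : Function.update ν.f i0 (κ.f i0 + 1) = ν.f := by
            rw [← hb]; exact Function.update_eq_self i0 ν.f
          rw [hself] at hstep
          have hφs : sizeF ν.f = sizeF (φ ν).f + 1 := by
            rw [hφf ν hν, hvν, hstep]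
          have hexp : sizeF ν.f - sizeF κ.f = (sizeF (φ ν).f - sizeF κ.f) + 1 := by
            omega
          rw [hexp, pow_succ]; ring
      exact sum_cancel hfin (fun ν => sizeF ν.f - sizeF κ.f) φ hmem hinv hsign
    · -- empty case
      push_neg at hle
      obtain ⟨i, hi⟩ := hle
      have hempty : S = ∅ := by
        ext ν
        simp only [Set.mem_empty_iff_false, iff_false]
        intro hν
        obtain ⟨h1, h2⟩ := (hmemS ν).1 hν
        have := (h1 i).1
        have := (h2 i).1
        omega
      rw [hempty, finsum_mem_empty]

/-- `Γ_{L+}(x) Γ_{R+}(-x) = Γ_{R+}(-x) Γ_{L+}(x) = Id` and similarly for the minus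
versions, stated as the equality of matrix elements `⟨κ|·|λ⟩` of both sides: on each matrix
element the signed sum over intermediate partitions `ν` equals `δ_{κλ}` (all contributions
having `x`-degree `||λ|-|κ||`). -/
theorem stmt9 (κ lam : IntPartition) :
    ((∑ᶠ ν ∈ {ν : IntPartition | Prec true κ ν ∧ Prec false ν lam},
        ((-1 : ℤ)) ^ (sizeF lam.f - sizeF ν.f)) = if κ = lam then 1 else 0) ∧
    ((∑ᶠ ν ∈ {ν : IntPartition | Prec false κ ν ∧ Prec true ν lam},
        ((-1 : ℤ)) ^ (sizeF ν.f - sizeF κ.f)) = if κ = lam then 1 else 0) ∧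
    ((∑ᶠ ν ∈ {ν : IntPartition | Prec false lam ν ∧ Prec true ν κ},
        ((-1 : ℤ)) ^ (sizeF ν.f - sizeF lam.f)) = if κ = lam then 1 else 0) ∧
    ((∑ᶠ ν ∈ {ν : IntPartition | Prec true lam ν ∧ Prec false ν κ},
        ((-1 : ℤ)) ^ (sizeF κ.f - sizeF ν.f)) = if κ = lam then 1 else 0) := by
  have hset1 : {ν : IntPartition | Prec true κ ν ∧ Prec false ν lam} =
      {ν : IntPartition | InterF ν.f κ.f ∧ InterF (conjF lam.f) (conjF ν.f)} := by
    ext ν; simp [Prec]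
  have hset2 : {ν : IntPartition | Prec false κ ν ∧ Prec true ν lam} =
      {ν : IntPartition | InterF (conjF ν.f) (conjF κ.f) ∧ InterF lam.f ν.f} := by
    ext ν; simp [Prec]
  have hset3 : {ν : IntPartition | Prec false lam ν ∧ Prec true ν κ} =
      {ν : IntPartition | InterF (conjF ν.f) (conjF lam.f) ∧ InterF κ.f ν.f} := by
    ext ν; simp [Prec]
  have hset4 : {ν : IntPartition | Prec true lam ν ∧ Prec false ν κ} =
      {ν : IntPartition | InterF ν.f lam.f ∧ InterF (conjF κ.f) (conjF ν.f)} := by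
    ext ν; simp [Prec]
  have hiff : (if lam = κ then (1 : ℤ) else 0) = (if κ = lam then (1 : ℤ) else 0) := by
    by_cases h : κ = lam
    · rw [if_pos h, if_pos h.symm]
    · rw [if_neg h, if_neg (fun hh => h hh.symm)]
  refine ⟨?_, ?_, ?_, ?_⟩
  · rw [hset1]; exact keyL κ lam
  · rw [hset2]; exact keyR κ lam
  · rw [hset3, keyR lam κ, hiff]
  · rw [hset4, keyL lam κ, hiff]
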